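/- Let a > 0 and t > 0. Then there exists a constant C ≥ 0 such that for every positive integer n, |3^{−n}·(2 + cos(a·√(6t/n)))^{n} − e^{−a²t}| ≤ C/n². -/

import Mathlib

open Real

private lemma sum6_re_aux (x : ℝ) :
    (∑ m ∈ Finset.range 6, ((x:ℂ)*Complex.I)^m / m.factorial).re
      = 1 - x^2/2 + x^4/24 := by
  simp [Finset.sum_range_succ, Nat.factorial, mul_pow, pow_succ, Complex.I_sq]
  ring

private lemma cos_bound6_aux {x : ℝ} (hx : |x| ≤ 1) :
    |Real.cos x - (1 - x^2/2 + x^4/24)| ≤ |x|^6 * (7/4320) := by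
  have h1 : Real.cos x - (1 - x^2/2 + x^4/24)
      = (Complex.exp (x*Complex.I)
          - ∑ m ∈ Finset.range 6, ((x:ℂ)*Complex.I)^m / m.factorial).re := by
    rw [Complex.sub_re, sum6_re_aux, Complex.exp_ofReal_mul_I_re]
  rw [h1]
  calc |(Complex.exp (x*Complex.I)
          - ∑ m ∈ Finset.range 6, ((x:ℂ)*Complex.I)^m / m.factorial).re|
      ≤ ‖(Complex.exp (x*Complex.I)
          - ∑ m ∈ Finset.range 6, ((x:ℂ)*Complex.I)^m / m.factorial)‖ :=
        Complex.abs_re_le_norm _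
    _ ≤ ‖((x:ℂ)*Complex.I)‖^6
          * (Nat.succ 6 * ((Nat.factorial 6) * (6:ℕ) : ℝ)⁻¹) :=
        Complex.exp_bound (by simpa) (by norm_num)
    _ ≤ |x|^6 * (7/4320) := by
        have h2 : ‖((x:ℂ)*Complex.I)‖ = |x| := by simp
        rw [h2]; norm_num [Nat.factorial]

private lemma key_bound_aux {x : ℝ} (hx : |x| ≤ 1) :
    |(2 + Real.cos x)/3 - Real.exp (-(x^2/6))| ≤ x^6 := by
  have hu : |(-(x^2/6))| ≤ 1 := by
    rw [abs_neg, abs_div]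
    have : x^2 ≤ 1 := by
      have := sq_abs x
      nlinarith [abs_nonneg x]
    rw [abs_of_nonneg (sq_nonneg x)]
    norm_num; linarith
  have hexp := Real.exp_bound hu (n := 3) (by norm_num)
  have hsum : (∑ i ∈ Finset.range 3, (-(x^2/6))^i / i.factorial)
      = 1 - x^2/6 + x^4/72 := by
    simp [Finset.sum_range_succ, Nat.factorial]; ring
  rw [hsum] at hexp
  have hcos := cos_bound6_aux hx
  have h1 : |(2 + Real.cos x)/3 - (1 - x^2/6 + x^4/72)|
      = |Real.cos x - (1 - x^2/2 + x^4/24)| / 3 := by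
    have heq : (2 + Real.cos x)/3 - (1 - x^2/6 + x^4/72)
        = (Real.cos x - (1 - x^2/2 + x^4/24)) / 3 := by ring
    rw [heq, abs_div, abs_of_nonneg (by norm_num : (0:ℝ) ≤ 3)]
  have h2 : |(2 + Real.cos x)/3 - Real.exp (-(x^2/6))|
      ≤ |(2 + Real.cos x)/3 - (1 - x^2/6 + x^4/72)|
        + |Real.exp (-(x^2/6)) - (1 - x^2/6 + x^4/72)| := by
    have := abs_sub_le ((2 + Real.cos x)/3) (1 - x^2/6 + x^4/72) (Real.exp (-(x^2/6)))
    rwa [abs_sub_comm (1 - x^2/6 + x^4/72)] at this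
  rw [abs_neg, abs_div, abs_of_nonneg (sq_nonneg x)] at hexp
  norm_num [Nat.factorial] at hexp
  have h4 : |x|^6 = x^6 := by
    rw [← abs_pow, abs_of_nonneg (by positivity : (0:ℝ) ≤ x^6)]
  nlinarith [abs_nonneg (Real.cos x - (1 - x^2/2 + x^4/24)),
    abs_nonneg (Real.exp (-(x^2/6)) - (1 - x^2/6 + x^4/72))]

private lemma pow_sub_pow_abs_aux {p q : ℝ} (hp0 : 0 ≤ p) (hp1 : p ≤ 1)
    (hq0 : 0 ≤ q) (hq1 : q ≤ 1) : ∀ n : ℕ, |p^n - q^n| ≤ n * |p - q| := by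
  intro n
  induction n with
  | zero => simp
  | succ n ih =>
    push_cast
    have h1 : p^(n+1) - q^(n+1) = p * (p^n - q^n) + (p - q) * q^n := by ring
    have h2 : |p * (p^n - q^n)| ≤ |p^n - q^n| := by
      rw [abs_mul, abs_of_nonneg hp0]
      exact mul_le_of_le_one_left (abs_nonneg _) hp1
    have h3 : |(p - q) * q^n| ≤ |p - q| := by
      rw [abs_mul, abs_of_nonneg (pow_nonneg hq0 n)]
      exact mul_le_of_le_one_right (abs_nonneg _)
        (pow_le_one₀ hq0 hq1)
    calc |p^(n+1) - q^(n+1)| ≤ |p * (p^n - q^n)| + |(p - q) * q^n| := by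
          rw [h1]; exact abs_add_le _ _
      _ ≤ n * |p - q| + |p - q| := by
          have := le_trans h2 ih; linarith
      _ = ((n:ℝ)+1) * |p - q| := by ring

theorem chernoff_heat_second_sin_rate (a t : ℝ) (ha : 0 < a) (ht : 0 < t) :
    ∃ C : ℝ, 0 ≤ C ∧ ∀ n : ℕ, 0 < n →
      |(1 / 3 ^ n) * (2 + Real.cos (a * Real.sqrt (6 * t / n))) ^ n
          - Real.exp (-(a ^ 2) * t)|
        ≤ C / (n : ℝ) ^ 2 := by
  set c : ℝ := a^2 * t with hc
  have hc0 : 0 < c := by positivity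
  refine ⟨216 * c^3 + (6*c + 1)^2, by positivity, ?_⟩
  intro n hn
  have hn0 : (0:ℝ) < n := by exact_mod_cast hn
  set x : ℝ := a * Real.sqrt (6 * t / n) with hxdef
  have hx0 : 0 ≤ x := by positivity
  have hx2 : x^2 = 6 * c / n := by
    rw [hxdef, mul_pow, Real.sq_sqrt (by positivity : (0:ℝ) ≤ 6 * t / n)]
    rw [hc]; ring
  set p : ℝ := (2 + Real.cos x)/3 with hpdef
  have hp0 : 0 ≤ p := by
    have := Real.neg_one_le_cos x
    rw [hpdef]; linarith
  have hp1 : p ≤ 1 := by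
    have := Real.cos_le_one x
    rw [hpdef]; linarith
  set q : ℝ := Real.exp (-(c/n)) with hqdef
  have hq0 : 0 ≤ q := (Real.exp_pos _).le
  have hq1 : q ≤ 1 := by
    rw [hqdef]
    exact Real.exp_le_one_iff.mpr (neg_nonpos.mpr (by positivity))
  have hqn : q^n = Real.exp (-(a^2) * t) := by
    rw [hqdef, ← Real.exp_nat_mul]
    congr 1
    field_simp
    ring
  have hterm : (1 / 3 ^ n) * (2 + Real.cos x) ^ n = p^n := by
    rw [hpdef, div_pow]; ring
  rw [hterm, ← hqn]
  rcases le_or_gt (6 * c) (n : ℝ) with hcase | hcase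
  · -- large n : use Taylor bounds
    have hx2' : x^2 * n = 6 * c := by
      rw [hx2]; field_simp
    have hxsq : x^2 ≤ 1 := by nlinarith [hx2', hcase, hn0]
    have hxle : |x| ≤ 1 := by
      rw [abs_of_nonneg hx0]
      nlinarith [hxsq, hx0, sq_nonneg (x - 1)]
    have hpq : |p - q| ≤ x^6 := by
      have := key_bound_aux hxle
      have hq' : Real.exp (-(x^2/6)) = q := by
        rw [hqdef]; congr 1; rw [hx2]; field_simp
      rwa [hq'] at this
    have hx6 : x^6 = 216 * c^3 / n^3 := by
      have : x^6 = (x^2)^3 := by ring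
      rw [this, hx2]; field_simp; ring
    calc |p^n - q^n| ≤ n * |p - q| := pow_sub_pow_abs_aux hp0 hp1 hq0 hq1 n
      _ ≤ n * (216 * c^3 / n^3) := by
          rw [← hx6]; exact mul_le_mul_of_nonneg_left hpq hn0.le
      _ = 216 * c^3 / n^2 := by field_simp
      _ ≤ (216 * c^3 + (6*c + 1)^2) / n^2 := by
          gcongr
          nlinarith
  · -- small n : trivial bound
    have h1 : |p^n - q^n| ≤ 1 := by
      rw [abs_sub_le_iff]
      constructor
      · have := pow_nonneg hq0 n
        have := pow_le_one₀ hp0 hp1 (n := n)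
        linarith
      · have := pow_nonneg hp0 n
        have := pow_le_one₀ hq0 hq1 (n := n)
        linarith
    have h2 : (1:ℝ) ≤ (216 * c^3 + (6*c + 1)^2) / n^2 := by
      rw [le_div_iff₀ (by positivity)]
      have e1 : (n:ℝ) * n < 6*c*(6*c) := mul_lt_mul'' hcase hcase hn0.le hn0.le
      nlinarith [e1, pow_pos hc0 3]
    linarith
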